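/- Let 0 < Lint < Lext and 0 < b < Lext be real numbers, and set Φ(β) := Lext + b·cos β. Let H : ℝ → ℝ and F : ℝ × ℝ → ℝ be twice continuously differentiable on an open set containing (Lint, Lext] and (Lint, Lext] × ℝ respectively, with H > 0 and F > 0 there. Suppose F(Lext, β) = Φ(β)² for all β, H(Lext) = 1, and ∂ℓF(Lext, β) = ∂ℓ²F(Lext, β) = 0 for all β. Then there exists δ > 0 such that Z_0(ℓ,β) < 0 for all (ℓ,β) ∈ (Lext−δ, Lext) × (π−δ, π+δ); that is, the weak energy condition is violated in an open set sufficiently close to ℓ = Lext and β = π. -/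

import Mathlib

open Real Filter Set
open scoped Topology

/-- First partial derivative of `F` with respect to its first argument `ℓ`. -/
noncomputable def pdl (F : ℝ × ℝ → ℝ) (l β : ℝ) : ℝ := deriv (fun x => F (x, β)) l

/-- Second partial derivative of `F` with respect to its first argument `ℓ`. -/
noncomputable def pdll (F : ℝ × ℝ → ℝ) (l β : ℝ) : ℝ := deriv (fun x => pdl F x β) l

/-- First partial derivative of `F` with respect to its second argument `β`. -/
noncomputable def pdb (F : ℝ × ℝ → ℝ) (l β : ℝ) : ℝ := deriv (fun y => F (l, y)) β

/-- Second partial derivative of `F` with respect to its second argument `β`. -/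
noncomputable def pdbb (F : ℝ × ℝ → ℝ) (l β : ℝ) : ℝ := deriv (fun y => pdb F l y) β

/-- The scalar `Z_ϑ = G_{ab} (A_ϑ)^a (A_ϑ)^b` for the metric
`ds² = −H dτ² + dℓ² + F dα² + b² dβ²` and `A_ϑ = H^{−1/2} ∂_τ + ϑ b^{−1} ∂_β`. -/
noncomputable def Zscalar (b : ℝ) (H : ℝ → ℝ) (F : ℝ × ℝ → ℝ) (ϑ l β : ℝ) : ℝ :=
  (1 / (4 * b ^ 2)) * ((pdb F l β / F (l, β)) ^ 2 - 2 * pdbb F l β / F (l, β))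
  + ((1 - ϑ ^ 2) / 4) * ((pdl F l β / F (l, β)) ^ 2 - 2 * pdll F l β / F (l, β))
  + (ϑ ^ 2 / 4) * (2 * deriv (deriv H) l / H l - (deriv H l / H l) ^ 2
      + (deriv H l / H l) * (pdl F l β / F (l, β)))

lemma hasDerivAt_comp_fst {F : ℝ × ℝ → ℝ} {l β : ℝ} (hf : DifferentiableAt ℝ F (l, β)) :
    HasDerivAt (fun x => F (x, β)) (fderiv ℝ F (l, β) (1, 0)) l :=
  hf.hasFDerivAt.comp_hasDerivAt l ((hasDerivAt_id l).prodMk (hasDerivAt_const l β))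

lemma hasDerivAt_comp_snd {F : ℝ × ℝ → ℝ} {l β : ℝ} (hf : DifferentiableAt ℝ F (l, β)) :
    HasDerivAt (fun y => F (l, y)) (fderiv ℝ F (l, β) (0, 1)) β :=
  hf.hasFDerivAt.comp_hasDerivAt β ((hasDerivAt_const β l).prodMk (hasDerivAt_id β))

set_option maxHeartbeats 1000000 in
/-- Part (i) of Theorem 1 of the paper: under the stated hypotheses, `Z_0 < 0` (violation of the
weak energy condition) in an open set sufficiently close to `ℓ = Lext` and `β = π`. -/
theorem WEC_violated_near_external_boundary
    (Lint Lext b : ℝ) (hLint : 0 < Lint) (hLL : Lint < Lext) (hb : 0 < b) (hbL : b < Lext)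
    (H : ℝ → ℝ) (F : ℝ × ℝ → ℝ)
    (U : Set ℝ) (hUopen : IsOpen U) (hUsub : Set.Ioc Lint Lext ⊆ U)
    (V : Set (ℝ × ℝ)) (hVopen : IsOpen V)
    (hVsub : Set.Ioc Lint Lext ×ˢ (Set.univ : Set ℝ) ⊆ V)
    (hH : ContDiffOn ℝ 2 H U) (hF : ContDiffOn ℝ 2 F V)
    (hHpos : ∀ x ∈ U, 0 < H x) (hFpos : ∀ p ∈ V, 0 < F p)
    (hFext : ∀ β : ℝ, F (Lext, β) = (Lext + b * Real.cos β) ^ 2)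
    (hHext : H Lext = 1)
    (hdl : ∀ β : ℝ, pdl F Lext β = 0) (hdll : ∀ β : ℝ, pdll F Lext β = 0) :
    ∃ δ > 0, ∀ l β : ℝ, l ∈ Set.Ioo (Lext - δ) Lext → β ∈ Set.Ioo (Real.pi - δ) (Real.pi + δ) →
      Zscalar b H F 0 l β < 0 := by
  have hp0V : ((Lext, Real.pi) : ℝ × ℝ) ∈ V := hVsub ⟨⟨hLL, le_refl Lext⟩, mem_univ _⟩
  have hVnhds : V ∈ 𝓝 ((Lext, Real.pi) : ℝ × ℝ) := hVopen.mem_nhds hp0V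
  -- differentiability of F on V
  have hFd : ∀ p ∈ V, DifferentiableAt ℝ F p := fun p hp =>
    (hF.contDiffAt (hVopen.mem_nhds hp)).differentiableAt two_ne_zero
  set D1 : ℝ × ℝ → ℝ := fun p => fderiv ℝ F p (1, 0) with hD1def
  set D2 : ℝ × ℝ → ℝ := fun p => fderiv ℝ F p (0, 1) with hD2def
  have hfderiv : ContDiffOn ℝ 1 (fderiv ℝ F) V := hF.fderiv_of_isOpen hVopen (le_refl 2)
  have hD1c : ContDiffOn ℝ 1 D1 V :=
    (ContinuousLinearMap.apply ℝ ℝ (((1 : ℝ), (0 : ℝ)))).contDiff.comp_contDiffOn hfderiv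
  have hD2c : ContDiffOn ℝ 1 D2 V :=
    (ContinuousLinearMap.apply ℝ ℝ (((0 : ℝ), (1 : ℝ)))).contDiff.comp_contDiffOn hfderiv
  have hD1d : ∀ p ∈ V, DifferentiableAt ℝ D1 p := fun p hp =>
    (hD1c.contDiffAt (hVopen.mem_nhds hp)).differentiableAt one_ne_zero
  have hD2d : ∀ p ∈ V, DifferentiableAt ℝ D2 p := fun p hp =>
    (hD2c.contDiffAt (hVopen.mem_nhds hp)).differentiableAt one_ne_zero
  set D11 : ℝ × ℝ → ℝ := fun p => fderiv ℝ D1 p (1, 0) with hD11def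
  set D22 : ℝ × ℝ → ℝ := fun p => fderiv ℝ D2 p (0, 1) with hD22def
  -- identification of the partial derivatives on V
  have hpdlV : ∀ l β, (l, β) ∈ V → pdl F l β = D1 (l, β) := fun l β h =>
    (hasDerivAt_comp_fst (hFd _ h)).deriv
  have hpdbV : ∀ l β, (l, β) ∈ V → pdb F l β = D2 (l, β) := fun l β h =>
    (hasDerivAt_comp_snd (hFd _ h)).deriv
  have hslice1 : ∀ l β : ℝ, (l, β) ∈ V → ∀ᶠ x in 𝓝 l, (x, β) ∈ V := fun l β h =>
    (hVopen.preimage (continuous_id.prodMk continuous_const)).mem_nhds h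
  have hslice2 : ∀ l β : ℝ, (l, β) ∈ V → ∀ᶠ y in 𝓝 β, (l, y) ∈ V := fun l β h =>
    (hVopen.preimage (continuous_const.prodMk continuous_id)).mem_nhds h
  have hpdllV : ∀ l β, (l, β) ∈ V → pdll F l β = D11 (l, β) := by
    intro l β h
    have he : (fun x => pdl F x β) =ᶠ[𝓝 l] fun x => D1 (x, β) :=
      (hslice1 l β h).mono fun x hx => hpdlV x β hx
    rw [pdll, he.deriv_eq]
    exact (hasDerivAt_comp_fst (hD1d _ h)).deriv
  have hpdbbV : ∀ l β, (l, β) ∈ V → pdbb F l β = D22 (l, β) := by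
    intro l β h
    have he : (fun y => pdb F l y) =ᶠ[𝓝 β] fun y => D2 (l, y) :=
      (hslice2 l β h).mono fun y hy => hpdbV l y hy
    rw [pdbb, he.deriv_eq]
    exact (hasDerivAt_comp_snd (hD2d _ h)).deriv
  -- the reduced expression for Z₀
  set G : ℝ × ℝ → ℝ := fun p =>
    (1 / (4 * b ^ 2)) * ((D2 p / F p) ^ 2 - 2 * D22 p / F p)
    + (1 / 4) * ((D1 p / F p) ^ 2 - 2 * D11 p / F p) with hGdef
  have key : ∀ p ∈ V, Zscalar b H F 0 p.1 p.2 = G p := by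
    intro p hp
    obtain ⟨l, β⟩ := p
    rw [Zscalar, hpdlV l β hp, hpdbV l β hp, hpdllV l β hp, hpdbbV l β hp, hGdef]
    ring
  -- continuity of G at (Lext, π)
  have hFc : ContinuousAt F (Lext, Real.pi) := (hF.continuousOn.continuousAt hVnhds)
  have hFpi : F (Lext, Real.pi) = (Lext - b) ^ 2 := by
    rw [hFext Real.pi, Real.cos_pi]; ring
  have hLb : (0 : ℝ) < Lext - b := sub_pos.mpr hbL
  have hFne : F (Lext, Real.pi) ≠ 0 := by rw [hFpi]; positivity
  have hD1ca : ContinuousAt D1 (Lext, Real.pi) := (hD1c.continuousOn.continuousAt hVnhds)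
  have hD2ca : ContinuousAt D2 (Lext, Real.pi) := (hD2c.continuousOn.continuousAt hVnhds)
  have hD11ca : ContinuousAt D11 (Lext, Real.pi) := by
    have := (hD1c.continuousOn_fderiv_of_isOpen hVopen (le_refl 1)).continuousAt hVnhds
    exact ((ContinuousLinearMap.apply ℝ ℝ (((1 : ℝ), (0 : ℝ)))).continuous.continuousAt).comp this
  have hD22ca : ContinuousAt D22 (Lext, Real.pi) := by
    have := (hD2c.continuousOn_fderiv_of_isOpen hVopen (le_refl 1)).continuousAt hVnhds
    exact ((ContinuousLinearMap.apply ℝ ℝ (((0 : ℝ), (1 : ℝ)))).continuous.continuousAt).comp this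
  have hGc : ContinuousAt G (Lext, Real.pi) := by
    apply ContinuousAt.add
    · exact continuousAt_const.mul
        (((hD2ca.div hFc hFne).pow 2).sub ((continuousAt_const.mul hD22ca).div hFc hFne))
    · exact continuousAt_const.mul
        (((hD1ca.div hFc hFne).pow 2).sub ((continuousAt_const.mul hD11ca).div hFc hFne))
  have hZc : ContinuousAt (fun p : ℝ × ℝ => Zscalar b H F 0 p.1 p.2) (Lext, Real.pi) := by
    have heq : (fun p : ℝ × ℝ => Zscalar b H F 0 p.1 p.2) =ᶠ[𝓝 ((Lext, Real.pi) : ℝ × ℝ)] G :=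
      eventually_of_mem hVnhds fun p hp => key p hp
    exact hGc.congr heq.symm
  -- the value at (Lext, π)
  have hΦ : ∀ y : ℝ, HasDerivAt (fun y => (Lext + b * Real.cos y) ^ 2)
      (2 * (Lext + b * Real.cos y) * (b * (-Real.sin y))) y := by
    intro y
    have h1 : HasDerivAt (fun y => Lext + b * Real.cos y) (b * (-Real.sin y)) y :=
      ((Real.hasDerivAt_cos y).const_mul b).const_add Lext
    have := h1.fun_pow 2
    norm_num at this
    refine this.congr_deriv ?_
    ring
  have hpdbval : ∀ y : ℝ, pdb F Lext y = 2 * (Lext + b * Real.cos y) * (b * (-Real.sin y)) := by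
    intro y
    rw [pdb, show (fun y => F (Lext, y)) = fun y => (Lext + b * Real.cos y) ^ 2 from
      funext hFext]
    exact (hΦ y).deriv
  have hpdbpi : pdb F Lext Real.pi = 0 := by rw [hpdbval]; simp
  have hpdbbpi : pdbb F Lext Real.pi = 2 * (Lext - b) * b := by
    rw [pdbb, show (fun y => pdb F Lext y)
        = fun y => (2 * (Lext + b * Real.cos y)) * (b * (-Real.sin y)) from
      funext fun y => hpdbval y]
    have h1 : HasDerivAt (fun y : ℝ => 2 * (Lext + b * Real.cos y))
        (2 * (b * (-Real.sin Real.pi))) Real.pi :=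
      (((Real.hasDerivAt_cos Real.pi).const_mul b).const_add Lext).const_mul 2
    have h2 : HasDerivAt (fun y : ℝ => b * (-Real.sin y)) (b * (-Real.cos Real.pi)) Real.pi :=
      ((Real.hasDerivAt_sin Real.pi).neg.const_mul b)
    rw [(show HasDerivAt (fun y : ℝ => 2 * (Lext + b * Real.cos y) * (b * (-Real.sin y))) _ Real.pi
      from h1.mul h2).deriv]
    simp only [Real.sin_pi, Real.cos_pi]
    ring
  have hZval : Zscalar b H F 0 Lext Real.pi < 0 := by
    rw [Zscalar, hdl, hdll, hpdbpi, hpdbbpi, hFpi]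
    have hEq : (1 / (4 * b ^ 2)) * ((0 / (Lext - b) ^ 2) ^ 2
          - 2 * (2 * (Lext - b) * b) / (Lext - b) ^ 2)
        + ((1 - (0:ℝ) ^ 2) / 4) * ((0 / (Lext - b) ^ 2) ^ 2 - 2 * 0 / (Lext - b) ^ 2)
        + ((0:ℝ) ^ 2 / 4) * (2 * deriv (deriv H) Lext / H Lext
          - (deriv H Lext / H Lext) ^ 2
          + (deriv H Lext / H Lext) * (0 / (Lext - b) ^ 2))
        = -(1 / (b * (Lext - b))) := by
      field_simp
      ring
    rw [hEq, neg_lt_zero]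
    positivity
  -- conclude by continuity
  have hev : ∀ᶠ p : ℝ × ℝ in 𝓝 (Lext, Real.pi), Zscalar b H F 0 p.1 p.2 < 0 :=
    hZc (Iio_mem_nhds hZval)
  rw [Metric.eventually_nhds_iff] at hev
  obtain ⟨ε, hε, hball⟩ := hev
  refine ⟨ε, hε, fun l β hl hβ => ?_⟩
  have hd : dist ((l, β) : ℝ × ℝ) (Lext, Real.pi) < ε := by
    clear * - hl hβ hε
    obtain ⟨hl1, hl2⟩ := hl
    obtain ⟨hβ1, hβ2⟩ := hβ
    rw [Prod.dist_eq]
    apply max_lt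
    · rw [Real.dist_eq, abs_lt]
      constructor <;> linarith
    · rw [Real.dist_eq, abs_lt]
      constructor <;> linarith
  have h2 := hball hd
  exact h2
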